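/- Let G be a finite group of odd order and let K be its K-set. Then K is contained in the commutator subgroup (commutant) of G. -/

import Mathlib

/-- The K-set of a group `G`: the set of all elements expressible as a product,
taken in some order, of all the non-identity elements of `G`, each occurring
exactly once. -/
def KSet (G : Type*) [Group G] : Set G :=
  {x | ∃ l : List G, l.Nodup ∧ (∀ g : G, g ∈ l ↔ g ≠ 1) ∧ l.prod = x}

theorem KSet_subset_commutator (G : Type*) [Group G] [Fintype G]
    (hG : Odd (Fintype.card G)) :
    KSet G ⊆ (commutator G : Subgroup G) := by
  classical
  intro x hx
  obtain ⟨l, hnd, hmem, hprod⟩ := hx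
  set φ : G →* Abelianization G := Abelianization.of with hφ
  -- the list 1 :: l enumerates all of G
  have h1 : (1 : G) ∉ l := fun h => (hmem 1).mp h rfl
  have hnd' : (1 :: l).Nodup := List.nodup_cons.mpr ⟨h1, hnd⟩
  have hall : ∀ g : G, g ∈ (1 :: l) := by
    intro g
    by_cases hg : g = 1
    · simp [hg]
    · exact List.mem_cons_of_mem _ ((hmem g).mpr hg)
  have htf : (1 :: l).toFinset = Finset.univ := by
    apply Finset.eq_univ_of_forall
    intro g
    exact List.mem_toFinset.mpr (hall g)
  have key : φ x = ∏ g : G, φ g := by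
    rw [← hprod]
    have : ((1 :: l).map φ).prod = φ l.prod := by
      simp only [List.map_cons, List.prod_cons, map_one, one_mul, ← List.prod_hom l φ]
    rw [← this, ← List.prod_toFinset φ hnd', htf]
  -- P := product of φ over all of G satisfies P^2 = 1
  set P : Abelianization G := ∏ g : G, φ g with hP
  have hPinv : P⁻¹ = P := by
    rw [hP, ← Finset.prod_inv_distrib]
    exact Fintype.prod_equiv (Equiv.inv G) _ _ (fun g => by simp)
  have hP2 : P ^ 2 = 1 := by
    have := mul_inv_cancel P
    rw [hPinv] at this
    rw [pow_two]; exact this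
  -- P has odd order
  have hdvd : Nat.card (Abelianization G) ∣ Nat.card G := by
    have := Subgroup.card_eq_card_quotient_mul_card_subgroup (commutator G)
    exact Dvd.intro _ this.symm
  have hG' : Odd (Nat.card G) := by rwa [Nat.card_eq_fintype_card]
  have hodd : Odd (Nat.card (Abelianization G)) := by
    rw [← Nat.not_even_iff_odd] at hG' ⊢
    intro he
    exact hG' (even_iff_two_dvd.mpr ((even_iff_two_dvd.mp he).trans hdvd))
  have hPm : P ^ (Nat.card (Abelianization G)) = 1 := pow_card_eq_one'
  obtain ⟨k, hk⟩ := hodd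
  have hP1 : P = 1 := by
    have : P ^ (2 * k + 1) = 1 := hk ▸ hPm
    rwa [pow_add, pow_mul, hP2, one_pow, one_mul, pow_one] at this
  have : φ x = 1 := key.trans hP1
  exact (QuotientGroup.eq_one_iff x).mp this
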